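/- Let X₁, …, Xₙ and Θ* be d×d real matrices with rank(Θ*) ≤ r and ‖Θ*‖_∞ ≤ α, let ẏ₁, …, ẏₙ ∈ ℝ and λ > 0, and let Θ̂ be a minimizer of (1/(2n))·Σ_{k=1}^n (ẏ_k − ⟨X_k, Θ⟩)² + λ‖Θ‖_nu over {Θ : ‖Θ‖_∞ ≤ α}; set Δ̂ = Θ̂ − Θ*. If λ ≥ 2‖(1/n)·Σ_{k=1}^n (⟨X_k, Θ*⟩ − ẏ_k)·X_k‖_op, then ‖Δ̂‖_nu ≤ 10√r·‖Δ̂‖_F. If moreover (1/n)·Σ_{k=1}^n ⟨X_k, Δ̂⟩² ≥ κ‖Δ̂‖_F² for some κ > 0, then ‖Δ̂‖_F ≤ 30√r·(λ/κ) and ‖Δ̂‖_nu ≤ 300r·(λ/κ). -/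

import Mathlib

open Finset

noncomputable section

/-- Trace inner product `⟨A, B⟩ = trace(AᵀB) = Σ_{ij} A_{ij}B_{ij}` of real matrices. -/
def minner {d : ℕ} (A B : Matrix (Fin d) (Fin d) ℝ) : ℝ := ∑ i, ∑ j, A i j * B i j

/-- Frobenius norm of a real matrix. -/
def frobNorm {d : ℕ} (A : Matrix (Fin d) (Fin d) ℝ) : ℝ := Real.sqrt (∑ i, ∑ j, (A i j) ^ 2)

/-- Maximum absolute entry of a matrix. -/
def matSup {d : ℕ} (A : Matrix (Fin d) (Fin d) ℝ) : ℝ := sSup {r : ℝ | ∃ i j, r = |A i j|}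

/-- ℓ₂ norm on `ℝ^d`. -/
def l2 {d : ℕ} (v : Fin d → ℝ) : ℝ := Real.sqrt (∑ i, (v i) ^ 2)

/-- Operator (spectral) norm of a real matrix. -/
def opNorm {d : ℕ} (A : Matrix (Fin d) (Fin d) ℝ) : ℝ :=
  sSup {r : ℝ | ∃ v : Fin d → ℝ, l2 v = 1 ∧ r = l2 (A.mulVec v)}

/-- Nuclear norm of a real matrix: the sum of its singular values, i.e. the sum of the
square roots of the eigenvalues of `AᵀA`. -/
def nucNorm {d : ℕ} (A : Matrix (Fin d) (Fin d) ℝ) : ℝ :=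
  ∑ i, Real.sqrt ((Matrix.posSemidef_conjTranspose_mul_self A).1.eigenvalues i)

open Matrix

section Aux
variable {d : ℕ}

def herm (A : Matrix (Fin d) (Fin d) ℝ) : (Aᴴ * A).IsHermitian :=
  (Matrix.posSemidef_conjTranspose_mul_self A).1

def ev (A : Matrix (Fin d) (Fin d) ℝ) : Fin d → ℝ := (herm A).eigenvalues

def eb (A : Matrix (Fin d) (Fin d) ℝ) (j : Fin d) : Fin d → ℝ :=
  ⇑((herm A).eigenvectorBasis j)

lemma nucNorm_eq (A : Matrix (Fin d) (Fin d) ℝ) : nucNorm A = ∑ j, Real.sqrt (ev A j) := rfl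

lemma ctr (A : Matrix (Fin d) (Fin d) ℝ) : Aᴴ = Aᵀ := by
  ext i j; simp [Matrix.conjTranspose_apply]

lemma ev_nonneg (A : Matrix (Fin d) (Fin d) ℝ) (j : Fin d) : 0 ≤ ev A j :=
  (Matrix.posSemidef_conjTranspose_mul_self A).eigenvalues_nonneg j

lemma mulVec_eb (A : Matrix (Fin d) (Fin d) ℝ) (j : Fin d) :
    (Aᵀ * A) *ᵥ eb A j = ev A j • eb A j := by
  rw [← ctr A]
  exact (herm A).mulVec_eigenvectorBasis j

lemma eb_dot (A : Matrix (Fin d) (Fin d) ℝ) (j k : Fin d) :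
    eb A j ⬝ᵥ eb A k = if j = k then 1 else 0 := by
  have h := (herm A).eigenvectorBasis.orthonormal
  rw [orthonormal_iff_ite] at h
  simpa [PiLp.inner_apply, eb, dotProduct, mul_comm] using h j k

lemma eb_complete (A : Matrix (Fin d) (Fin d) ℝ) (l k : Fin d) :
    ∑ j, eb A j l * eb A j k = if l = k then 1 else 0 := by
  classical
  set B : Matrix (Fin d) (Fin d) ℝ := Matrix.of (fun j l => eb A j l) with hB
  have h1 : B * Bᵀ = 1 := by
    ext j k
    simpa [Matrix.mul_apply, hB, Matrix.one_apply, dotProduct] using eb_dot A j k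
  have h2 : Bᵀ * B = 1 := mul_eq_one_comm.mp h1
  have h3 := congrFun (congrFun h2 l) k
  simpa [Matrix.mul_apply, hB, Matrix.one_apply] using h3

lemma mulVec_dotProduct_eq (M : Matrix (Fin d) (Fin d) ℝ) (x y : Fin d → ℝ) :
    (M *ᵥ x) ⬝ᵥ y = x ⬝ᵥ (Mᵀ *ᵥ y) := by
  rw [Matrix.dotProduct_mulVec, Matrix.vecMul_transpose]

lemma mulVec_dot_mulVec (A : Matrix (Fin d) (Fin d) ℝ) (x y : Fin d → ℝ) :
    (A *ᵥ x) ⬝ᵥ (A *ᵥ y) = x ⬝ᵥ ((Aᵀ * A) *ᵥ y) := by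
  rw [mulVec_dotProduct_eq, Matrix.mulVec_mulVec]

lemma im_dot (A : Matrix (Fin d) (Fin d) ℝ) (j k : Fin d) :
    (A *ᵥ eb A j) ⬝ᵥ (A *ᵥ eb A k) = if j = k then ev A j else 0 := by
  rw [mulVec_dot_mulVec, mulVec_eb, dotProduct_smul, smul_eq_mul, eb_dot]
  by_cases h : j = k
  · subst h; simp
  · simp [h]

lemma l2_eq_sqrt_dot (v : Fin d → ℝ) : l2 v = Real.sqrt (v ⬝ᵥ v) := by
  simp [l2, dotProduct, sq]

lemma dot_self_nonneg (v : Fin d → ℝ) : 0 ≤ v ⬝ᵥ v :=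
  Finset.sum_nonneg fun i _ => mul_self_nonneg _

lemma l2_nonneg (v : Fin d → ℝ) : 0 ≤ l2 v := Real.sqrt_nonneg _

lemma l2_sq (v : Fin d → ℝ) : l2 v ^ 2 = v ⬝ᵥ v := by
  rw [l2_eq_sqrt_dot, Real.sq_sqrt (dot_self_nonneg v)]

lemma dot_le_l2 (v w : Fin d → ℝ) : v ⬝ᵥ w ≤ l2 v * l2 w := by
  have h := Finset.sum_mul_sq_le_sq_mul_sq Finset.univ v w
  calc v ⬝ᵥ w ≤ |v ⬝ᵥ w| := le_abs_self _
    _ = Real.sqrt ((v ⬝ᵥ w) ^ 2) := (Real.sqrt_sq_eq_abs _).symm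
    _ ≤ Real.sqrt ((∑ i, v i ^ 2) * ∑ i, w i ^ 2) := Real.sqrt_le_sqrt h
    _ = l2 v * l2 w := by
        rw [l2, l2, ← Real.sqrt_mul (Finset.sum_nonneg fun i _ => sq_nonneg _)]


lemma sum_dot (M Z : Matrix (Fin d) (Fin d) ℝ) :
    ∑ j, (M *ᵥ eb Z j) ⬝ᵥ (Z *ᵥ eb Z j) = minner M Z := by
  have h1 : ∀ j, (M *ᵥ eb Z j) ⬝ᵥ (Z *ᵥ eb Z j)
      = ∑ i, ∑ k, ∑ l, M i k * Z i l * (eb Z j k * eb Z j l) := by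
    intro j
    simp only [dotProduct, Matrix.mulVec, Finset.sum_mul_sum]
    exact Finset.sum_congr rfl fun i _ => Finset.sum_congr rfl fun k _ =>
      Finset.sum_congr rfl fun l _ => by ring
  rw [Finset.sum_congr rfl fun j (_ : j ∈ Finset.univ) => h1 j, Finset.sum_comm]
  unfold minner
  refine Finset.sum_congr rfl fun i _ => ?_
  calc ∑ j, ∑ k, ∑ l, M i k * Z i l * (eb Z j k * eb Z j l)
      = ∑ k, ∑ l, M i k * Z i l * ∑ j, eb Z j k * eb Z j l := by
        rw [Finset.sum_comm]
        refine Finset.sum_congr rfl fun k _ => ?_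
        rw [Finset.sum_comm]
        exact Finset.sum_congr rfl fun l _ => by rw [Finset.mul_sum]
    _ = ∑ k, M i k * Z i k := by
        simp only [eb_complete]
        simp [Finset.sum_ite_eq, mul_ite]

lemma l2_mulVec_le (A : Matrix (Fin d) (Fin d) ℝ) (v : Fin d → ℝ) :
    l2 (A *ᵥ v) ≤ frobNorm A * l2 v := by
  have h : (A *ᵥ v) ⬝ᵥ (A *ᵥ v) ≤ (∑ i, ∑ k, A i k ^ 2) * (∑ k, v k ^ 2) := by
    simp only [dotProduct, Matrix.mulVec]
    rw [Finset.sum_mul]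
    refine Finset.sum_le_sum fun i _ => ?_
    have h2 := Finset.sum_mul_sq_le_sq_mul_sq Finset.univ (fun k => A i k) v
    calc (∑ k, A i k * v k) * (∑ k, A i k * v k) = (∑ k, A i k * v k) ^ 2 := (sq _).symm
      _ ≤ (∑ k, A i k ^ 2) * ∑ k, v k ^ 2 := h2
  rw [l2_eq_sqrt_dot, l2, frobNorm,
    ← Real.sqrt_mul (Finset.sum_nonneg fun i _ => Finset.sum_nonneg fun k _ => sq_nonneg (A i k))]
  exact Real.sqrt_le_sqrt h

lemma bddAbove_opSet (A : Matrix (Fin d) (Fin d) ℝ) :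
    BddAbove {r : ℝ | ∃ v : Fin d → ℝ, l2 v = 1 ∧ r = l2 (A.mulVec v)} := by
  refine ⟨frobNorm A, ?_⟩
  rintro r ⟨v, hv, rfl⟩
  have h := l2_mulVec_le A v
  rwa [hv, mul_one] at h

lemma l2_mulVec_le_opNorm (A : Matrix (Fin d) (Fin d) ℝ) (v : Fin d → ℝ) (hv : l2 v = 1) :
    l2 (A *ᵥ v) ≤ opNorm A :=
  le_csSup (bddAbove_opSet A) ⟨v, hv, rfl⟩

lemma opNorm_le (A : Matrix (Fin d) (Fin d) ℝ) {c : ℝ} (hc : 0 ≤ c)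
    (h : ∀ v : Fin d → ℝ, l2 v = 1 → l2 (A *ᵥ v) ≤ c) : opNorm A ≤ c :=
  Real.sSup_le (by rintro r ⟨v, hv, rfl⟩; exact h v hv) hc

lemma l2_neg (v : Fin d → ℝ) : l2 (-v) = l2 v := by simp [l2]

lemma opNorm_neg (A : Matrix (Fin d) (Fin d) ℝ) : opNorm (-A) = opNorm A := by
  unfold opNorm
  congr 1
  ext r
  constructor
  · rintro ⟨v, hv, rfl⟩
    exact ⟨v, hv, by rw [Matrix.neg_mulVec, l2_neg]⟩
  · rintro ⟨v, hv, rfl⟩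
    exact ⟨v, hv, by rw [Matrix.neg_mulVec, l2_neg]⟩

lemma eb_unit (A : Matrix (Fin d) (Fin d) ℝ) (j : Fin d) : l2 (eb A j) = 1 := by
  rw [l2_eq_sqrt_dot, eb_dot]
  simp

lemma l2_mulVec_eb (A : Matrix (Fin d) (Fin d) ℝ) (j : Fin d) :
    l2 (A *ᵥ eb A j) = Real.sqrt (ev A j) := by
  rw [l2_eq_sqrt_dot, im_dot]
  simp

lemma minner_le_op_nuc (M Z : Matrix (Fin d) (Fin d) ℝ) :
    minner M Z ≤ opNorm M * nucNorm Z := by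
  rw [← sum_dot M Z, nucNorm_eq, Finset.mul_sum]
  refine Finset.sum_le_sum fun j _ => ?_
  calc (M *ᵥ eb Z j) ⬝ᵥ (Z *ᵥ eb Z j) ≤ l2 (M *ᵥ eb Z j) * l2 (Z *ᵥ eb Z j) := dot_le_l2 _ _
    _ = l2 (M *ᵥ eb Z j) * Real.sqrt (ev Z j) := by rw [l2_mulVec_eb]
    _ ≤ opNorm M * Real.sqrt (ev Z j) :=
        mul_le_mul_of_nonneg_right (l2_mulVec_le_opNorm M _ (eb_unit Z j)) (Real.sqrt_nonneg _)


lemma minner_eq_trace (A B : Matrix (Fin d) (Fin d) ℝ) :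
    minner A B = Matrix.trace (Aᵀ * B) := by
  unfold minner Matrix.trace
  simp only [Matrix.diag, Matrix.mul_apply, Matrix.transpose_apply]
  exact Finset.sum_comm

lemma minner_zero_left (B : Matrix (Fin d) (Fin d) ℝ) : minner 0 B = 0 := by simp [minner]

lemma minner_add_left (A B C : Matrix (Fin d) (Fin d) ℝ) :
    minner (A + B) C = minner A C + minner B C := by
  simp [minner, Matrix.add_apply, add_mul, Finset.sum_add_distrib]

lemma minner_add_right (A B C : Matrix (Fin d) (Fin d) ℝ) :
    minner A (B + C) = minner A B + minner A C := by
  simp [minner, Matrix.add_apply, mul_add, Finset.sum_add_distrib]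

lemma minner_smul_left (c : ℝ) (A B : Matrix (Fin d) (Fin d) ℝ) :
    minner (c • A) B = c * minner A B := by
  simp [minner, Matrix.smul_apply, smul_eq_mul, Finset.mul_sum, mul_assoc]

lemma minner_neg_left (A B : Matrix (Fin d) (Fin d) ℝ) : minner (-A) B = -minner A B := by
  simp [minner, Matrix.neg_apply, Finset.sum_neg_distrib]

lemma minner_sub_right (A B C : Matrix (Fin d) (Fin d) ℝ) :
    minner A (B - C) = minner A B - minner A C := by
  simp [minner, Matrix.sub_apply, mul_sub, Finset.sum_sub_distrib]

lemma minner_sum_left {ι : Type*} [Fintype ι] (f : ι → Matrix (Fin d) (Fin d) ℝ)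
    (B : Matrix (Fin d) (Fin d) ℝ) : minner (∑ i, f i) B = ∑ i, minner (f i) B := by
  classical
  have h : ∀ s : Finset ι, minner (∑ i ∈ s, f i) B = ∑ i ∈ s, minner (f i) B := by
    intro s
    induction s using Finset.cons_induction with
    | empty => simp [minner_zero_left]
    | cons a s ha ih => rw [Finset.sum_cons, Finset.sum_cons, minner_add_left, ih]
  exact h Finset.univ

lemma frobNorm_nonneg (A : Matrix (Fin d) (Fin d) ℝ) : 0 ≤ frobNorm A := Real.sqrt_nonneg _

lemma minner_self (A : Matrix (Fin d) (Fin d) ℝ) : minner A A = frobNorm A ^ 2 := by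
  rw [frobNorm, Real.sq_sqrt (Finset.sum_nonneg fun i _ => Finset.sum_nonneg fun j _ => sq_nonneg (A i j))]
  exact Finset.sum_congr rfl fun i _ => Finset.sum_congr rfl fun j _ => (sq _).symm

lemma minner_vecMulVec_left (u v : Fin d → ℝ) (Z : Matrix (Fin d) (Fin d) ℝ) :
    minner (Matrix.vecMulVec u v) Z = u ⬝ᵥ (Z *ᵥ v) := by
  simp only [minner, Matrix.vecMulVec_apply, dotProduct, Matrix.mulVec, Finset.mul_sum]
  exact Finset.sum_congr rfl fun i _ => Finset.sum_congr rfl fun j _ => by ring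

lemma sum_smul_dot {ι : Type*} [Fintype ι] (a : ι → ℝ) (x : ι → Fin d → ℝ) (y : Fin d → ℝ) :
    (∑ j, a j • x j) ⬝ᵥ y = ∑ j, a j * (x j ⬝ᵥ y) := by
  simp only [dotProduct, Finset.sum_apply, Pi.smul_apply, smul_eq_mul, Finset.sum_mul,
    Finset.mul_sum]
  rw [Finset.sum_comm]
  exact Finset.sum_congr rfl fun j _ => Finset.sum_congr rfl fun i _ => by ring

lemma dot_sum_smul_right {ι : Type*} [Fintype ι] (x : Fin d → ℝ) (b : ι → ℝ)
    (y : ι → Fin d → ℝ) : x ⬝ᵥ (∑ k, b k • y k) = ∑ k, b k * (x ⬝ᵥ y k) := by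
  rw [dotProduct_comm, sum_smul_dot]
  exact Finset.sum_congr rfl fun k _ => by rw [dotProduct_comm]

lemma dot_sum_smul {ι κ : Type*} [Fintype ι] [Fintype κ] (a : ι → ℝ) (x : ι → Fin d → ℝ)
    (b : κ → ℝ) (y : κ → Fin d → ℝ) :
    (∑ j, a j • x j) ⬝ᵥ (∑ k, b k • y k) = ∑ j, ∑ k, a j * b k * (x j ⬝ᵥ y k) := by
  rw [sum_smul_dot]
  refine Finset.sum_congr rfl fun j _ => ?_
  rw [dot_sum_smul_right, Finset.mul_sum]
  exact Finset.sum_congr rfl fun k _ => by ring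

lemma sum_mulVec {ι : Type*} [Fintype ι] (M : ι → Matrix (Fin d) (Fin d) ℝ) (u : Fin d → ℝ) :
    (∑ j, M j) *ᵥ u = ∑ j, (M j *ᵥ u) := by
  ext i
  simp only [Matrix.mulVec, dotProduct, Finset.sum_apply, Matrix.sum_apply,
    Finset.sum_mul]
  exact Finset.sum_comm

lemma smul_mulVec (c : ℝ) (M : Matrix (Fin d) (Fin d) ℝ) (u : Fin d → ℝ) :
    (c • M) *ᵥ u = c • (M *ᵥ u) := Matrix.smul_mulVec c M u

lemma vecMulVec_mulVec (x v u : Fin d → ℝ) :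
    (Matrix.vecMulVec x v) *ᵥ u = (v ⬝ᵥ u) • x := by
  ext i
  simp only [Matrix.mulVec, dotProduct, Matrix.vecMulVec_apply, Pi.smul_apply,
    smul_eq_mul, Finset.sum_mul]
  exact Finset.sum_congr rfl fun k _ => by ring

lemma bessel {ι : Type*} [Fintype ι] (w : ι → Fin d → ℝ) (v : Fin d → ℝ)
    (h1 : ∀ j k, j ≠ k → w j ⬝ᵥ w k = 0) (h2 : ∀ j, w j ⬝ᵥ w j ≤ 1) :
    ∑ j, (w j ⬝ᵥ v) ^ 2 ≤ v ⬝ᵥ v := by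
  classical
  set c : ι → ℝ := fun j => w j ⬝ᵥ v with hc
  set e : Fin d → ℝ := v - ∑ j, c j • w j with he
  have hdse : 0 ≤ e ⬝ᵥ e := dot_self_nonneg e
  have hvs : v ⬝ᵥ (∑ j, c j • w j) = ∑ j, c j ^ 2 := by
    rw [dot_sum_smul_right]
    exact Finset.sum_congr rfl fun j _ => by rw [dotProduct_comm]; ring
  have hsv : (∑ j, c j • w j) ⬝ᵥ v = ∑ j, c j ^ 2 := by
    rw [sum_smul_dot]
    exact Finset.sum_congr rfl fun j _ => by ring
  have hss : (∑ j, c j • w j) ⬝ᵥ (∑ j, c j • w j) = ∑ j, c j ^ 2 * (w j ⬝ᵥ w j) := by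
    rw [dot_sum_smul]
    refine Finset.sum_congr rfl fun j _ => ?_
    rw [Finset.sum_eq_single j]
    · ring
    · intro k _ hk
      rw [h1 j k (Ne.symm hk)]
      ring
    · intro h; exact absurd (Finset.mem_univ j) h
  have hexp : e ⬝ᵥ e = v ⬝ᵥ v - 2 * ∑ j, c j ^ 2 + ∑ j, c j ^ 2 * (w j ⬝ᵥ w j) := by
    rw [he, sub_dotProduct, dotProduct_sub, dotProduct_sub,
      hvs, hsv, hss]
    ring
  have hle : ∑ j, c j ^ 2 * (w j ⬝ᵥ w j) ≤ ∑ j, c j ^ 2 :=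
    Finset.sum_le_sum fun j _ => by
      calc c j ^ 2 * (w j ⬝ᵥ w j) ≤ c j ^ 2 * 1 :=
            mul_le_mul_of_nonneg_left (h2 j) (sq_nonneg _)
        _ = c j ^ 2 := mul_one _
  have : ∑ j, c j ^ 2 ≤ v ⬝ᵥ v := by linarith [hexp ▸ hdse]
  exact this


def dualC (Z : Matrix (Fin d) (Fin d) ℝ) (j : Fin d) : ℝ :=
  if ev Z j = 0 then 0 else (Real.sqrt (ev Z j))⁻¹

def dualW (Z : Matrix (Fin d) (Fin d) ℝ) : Matrix (Fin d) (Fin d) ℝ :=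
  ∑ j, dualC Z j • Matrix.vecMulVec (Z *ᵥ eb Z j) (eb Z j)

lemma sqrt_ev_ne {Z : Matrix (Fin d) (Fin d) ℝ} {j : Fin d} (h : ev Z j ≠ 0) :
    Real.sqrt (ev Z j) ≠ 0 :=
  Real.sqrt_ne_zero'.mpr (lt_of_le_of_ne (ev_nonneg Z j) (Ne.symm h))

lemma dualC_sq {Z : Matrix (Fin d) (Fin d) ℝ} {j : Fin d} (h : ev Z j ≠ 0) :
    dualC Z j * dualC Z j * ev Z j = 1 := by
  rw [dualC, if_neg h]
  nth_rewrite 3 [← Real.mul_self_sqrt (ev_nonneg Z j)]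
  field_simp
  exact div_self (sqrt_ev_ne h)

lemma minner_dualW (Z : Matrix (Fin d) (Fin d) ℝ) : minner (dualW Z) Z = nucNorm Z := by
  rw [dualW, minner_sum_left, nucNorm_eq]
  refine Finset.sum_congr rfl fun j _ => ?_
  rw [minner_smul_left, minner_vecMulVec_left, im_dot, if_pos rfl]
  by_cases h : ev Z j = 0
  · simp [dualC, h]
  · rw [dualC, if_neg h, inv_mul_eq_iff_eq_mul₀ (sqrt_ev_ne h)]
    exact (Real.mul_self_sqrt (ev_nonneg Z j)).symm

lemma dualW_mulVec (Z : Matrix (Fin d) (Fin d) ℝ) (u : Fin d → ℝ) :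
    (dualW Z) *ᵥ u = ∑ j, (dualC Z j * (eb Z j ⬝ᵥ u)) • (Z *ᵥ eb Z j) := by
  rw [dualW, _root_.sum_mulVec]
  refine Finset.sum_congr rfl fun j _ => ?_
  rw [_root_.smul_mulVec, vecMulVec_mulVec, smul_smul]

lemma dot_zero_of_orth {A B : Matrix (Fin d) (Fin d) ℝ} (hAB : Aᵀ * B = 0)
    (x y : Fin d → ℝ) : (A *ᵥ x) ⬝ᵥ (B *ᵥ y) = 0 := by
  rw [mulVec_dotProduct_eq, Matrix.mulVec_mulVec, hAB, Matrix.zero_mulVec,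
    dotProduct_zero]

lemma dualW_dot_cross {A B : Matrix (Fin d) (Fin d) ℝ} (hAB : Aᵀ * B = 0)
    (u w : Fin d → ℝ) : ((dualW A) *ᵥ u) ⬝ᵥ ((dualW B) *ᵥ w) = 0 := by
  rw [dualW_mulVec, dualW_mulVec, dot_sum_smul]
  refine Finset.sum_eq_zero fun j _ => Finset.sum_eq_zero fun k _ => ?_
  rw [dot_zero_of_orth hAB, mul_zero]

lemma dualW_dot_self (A : Matrix (Fin d) (Fin d) ℝ) (u : Fin d → ℝ) :
    ((dualW A) *ᵥ u) ⬝ᵥ ((dualW A) *ᵥ u)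
      = ∑ j, (if ev A j = 0 then 0 else 1) * (eb A j ⬝ᵥ u) ^ 2 := by
  rw [dualW_mulVec, dot_sum_smul]
  refine Finset.sum_congr rfl fun j _ => ?_
  rw [Finset.sum_eq_single j]
  · rw [im_dot, if_pos rfl]
    by_cases h : ev A j = 0
    · simp [dualC, h]
    · rw [if_neg h, one_mul]
      calc dualC A j * (eb A j ⬝ᵥ u) * (dualC A j * (eb A j ⬝ᵥ u)) * ev A j
          = dualC A j * dualC A j * ev A j * (eb A j ⬝ᵥ u) ^ 2 := by ring
        _ = (eb A j ⬝ᵥ u) ^ 2 := by rw [dualC_sq h, one_mul]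
  · intro k _ hk
    rw [im_dot, if_neg (Ne.symm hk), mul_zero]
  · intro h; exact absurd (Finset.mem_univ j) h

lemma ev_smul_eb (Z : Matrix (Fin d) (Fin d) ℝ) (j : Fin d) (h : ev Z j ≠ 0) :
    eb Z j = (ev Z j)⁻¹ • ((Zᵀ * Z) *ᵥ eb Z j) := by
  rw [mulVec_eb, smul_smul, inv_mul_cancel₀ h, one_smul]

lemma mulVec_eb_orth {A B : Matrix (Fin d) (Fin d) ℝ} (hBA : A * Bᵀ = 0) {k : Fin d}
    (hk : ev B k ≠ 0) : A *ᵥ eb B k = 0 := by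
  rw [ev_smul_eb B k hk, Matrix.mulVec_smul, Matrix.mulVec_mulVec, ← Matrix.mul_assoc,
    hBA, Matrix.zero_mul, Matrix.zero_mulVec, smul_zero]

lemma eb_cross {A B : Matrix (Fin d) (Fin d) ℝ} (hBA : A * Bᵀ = 0) {j k : Fin d}
    (hj : ev A j ≠ 0) (hk : ev B k ≠ 0) : eb A j ⬝ᵥ eb B k = 0 := by
  rw [ev_smul_eb A j hj, smul_dotProduct, dotProduct_comm,
    ← mulVec_dot_mulVec, mulVec_eb_orth hBA hk, zero_dotProduct, smul_zero]

lemma opNorm_dualW_add {A B : Matrix (Fin d) (Fin d) ℝ} (hAB : Aᵀ * B = 0)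
    (hBA : A * Bᵀ = 0) : opNorm (dualW A + dualW B) ≤ 1 := by
  have hABt : Bᵀ * A = 0 := by
    have h := congrArg Matrix.transpose hAB
    rwa [Matrix.transpose_mul, Matrix.transpose_transpose, Matrix.transpose_zero] at h
  have hBAt : B * Aᵀ = 0 := by
    have h := congrArg Matrix.transpose hBA
    rwa [Matrix.transpose_mul, Matrix.transpose_transpose, Matrix.transpose_zero] at h
  refine opNorm_le _ zero_le_one fun v hv => ?_
  have hv2 : v ⬝ᵥ v = 1 := by rw [← l2_sq, hv]; norm_num
  set w : Fin d ⊕ Fin d → (Fin d → ℝ) :=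
    Sum.elim (fun j => (if ev A j = 0 then (0:ℝ) else 1) • eb A j)
      (fun k => (if ev B k = 0 then (0:ℝ) else 1) • eb B k) with hw
  have h1 : ∀ s t : Fin d ⊕ Fin d, s ≠ t → w s ⬝ᵥ w t = 0 := by
    rintro (j|j) (k|k) hst
    · have hjk : j ≠ k := fun h => hst (by rw [h])
      rw [hw]
      simp only [Sum.elim_inl, smul_dotProduct, dotProduct_smul, eb_dot,
        if_neg hjk]
      simp
    · rw [hw]
      simp only [Sum.elim_inl, Sum.elim_inr, smul_dotProduct, dotProduct_smul]
      by_cases hj : ev A j = 0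
      · simp [hj]
      · by_cases hk : ev B k = 0
        · simp [hk]
        · rw [eb_cross hBA hj hk]
          simp
    · rw [hw]
      simp only [Sum.elim_inl, Sum.elim_inr, smul_dotProduct, dotProduct_smul]
      by_cases hj : ev B j = 0
      · simp [hj]
      · by_cases hk : ev A k = 0
        · simp [hk]
        · rw [dotProduct_comm, eb_cross hBA hk hj]
          simp
    · have hjk : j ≠ k := fun h => hst (by rw [h])
      rw [hw]
      simp only [Sum.elim_inr, smul_dotProduct, dotProduct_smul, eb_dot,
        if_neg hjk]
      simp
  have h2 : ∀ s : Fin d ⊕ Fin d, w s ⬝ᵥ w s ≤ 1 := by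
    rintro (j|j) <;> rw [hw] <;>
      [simp only [Sum.elim_inl, smul_dotProduct, dotProduct_smul, eb_dot,
        if_pos rfl];
       simp only [Sum.elim_inr, smul_dotProduct, dotProduct_smul, eb_dot,
        if_pos rfl]] <;> split <;> simp
  have hbes := bessel w v h1 h2
  rw [Fintype.sum_sum_type] at hbes
  have hsq : ∀ (c : ℝ) (x : Fin d → ℝ), ((if c = 0 then (0:ℝ) else 1) • x ⬝ᵥ v) ^ 2
      = (if c = 0 then (0:ℝ) else 1) * (x ⬝ᵥ v) ^ 2 := by
    intro c x
    rw [smul_dotProduct]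
    split <;> simp
  have hdot : ((dualW A + dualW B) *ᵥ v) ⬝ᵥ ((dualW A + dualW B) *ᵥ v) ≤ 1 := by
    rw [Matrix.add_mulVec, add_dotProduct, dotProduct_add,
      dotProduct_add, dualW_dot_self, dualW_dot_self, dualW_dot_cross hAB,
      dualW_dot_cross hABt]
    have hA' : ∑ j, (if ev A j = 0 then (0:ℝ) else 1) * (eb A j ⬝ᵥ v) ^ 2
        = ∑ j, (w (Sum.inl j) ⬝ᵥ v) ^ 2 :=
      Finset.sum_congr rfl fun j _ => by rw [hw]; simp only [Sum.elim_inl]; rw [hsq]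
    have hB' : ∑ j, (if ev B j = 0 then (0:ℝ) else 1) * (eb B j ⬝ᵥ v) ^ 2
        = ∑ j, (w (Sum.inr j) ⬝ᵥ v) ^ 2 :=
      Finset.sum_congr rfl fun j _ => by rw [hw]; simp only [Sum.elim_inr]; rw [hsq]
    rw [hA', hB']
    linarith [hv2 ▸ hbes]
  rw [l2_eq_sqrt_dot]
  exact Real.sqrt_le_one.mpr hdot

lemma ev_zero (j : Fin d) : ev (0 : Matrix (Fin d) (Fin d) ℝ) j = 0 := by
  have h := im_dot (0 : Matrix (Fin d) (Fin d) ℝ) j j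
  rw [if_pos rfl] at h
  simpa using h.symm

lemma dualW_zero : dualW (0 : Matrix (Fin d) (Fin d) ℝ) = 0 := by
  rw [dualW]
  refine Finset.sum_eq_zero fun j _ => ?_
  simp [dualC, ev_zero]

lemma opNorm_dualW (Z : Matrix (Fin d) (Fin d) ℝ) : opNorm (dualW Z) ≤ 1 := by
  have h := opNorm_dualW_add (A := Z) (B := 0) (by simp) (by simp)
  rwa [dualW_zero, add_zero] at h

lemma nucNorm_nonneg (A : Matrix (Fin d) (Fin d) ℝ) : 0 ≤ nucNorm A := by
  rw [nucNorm_eq]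
  exact Finset.sum_nonneg fun j _ => Real.sqrt_nonneg _

lemma minner_le_nuc {W : Matrix (Fin d) (Fin d) ℝ} (hW : opNorm W ≤ 1)
    (Z : Matrix (Fin d) (Fin d) ℝ) : minner W Z ≤ nucNorm Z :=
  le_trans (minner_le_op_nuc W Z) (mul_le_of_le_one_left (nucNorm_nonneg Z) hW)

lemma nucNorm_triangle (A B : Matrix (Fin d) (Fin d) ℝ) :
    nucNorm (A + B) ≤ nucNorm A + nucNorm B := by
  have h := minner_dualW (A + B)
  rw [minner_add_right] at h
  have hA := minner_le_nuc (opNorm_dualW (A + B)) A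
  have hB := minner_le_nuc (opNorm_dualW (A + B)) B
  linarith

lemma sum_ev (A : Matrix (Fin d) (Fin d) ℝ) : ∑ j, ev A j = frobNorm A ^ 2 := by
  rw [← minner_self, ← sum_dot A A]
  refine Finset.sum_congr rfl fun j _ => ?_
  rw [im_dot, if_pos rfl]


lemma rank_eq_card (A : Matrix (Fin d) (Fin d) ℝ) :
    A.rank = Fintype.card {i // ev A i ≠ 0} := by
  have h := (herm A).rank_eq_card_non_zero_eigs
  rwa [Matrix.rank_conjTranspose_mul_self] at h

lemma matRank_add_le (A B : Matrix (Fin d) (Fin d) ℝ) :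
    (A + B).rank ≤ A.rank + B.rank := by
  rw [Matrix.rank, Matrix.rank, Matrix.rank, Matrix.mulVecLin_add]
  have hr : LinearMap.range (A.mulVecLin + B.mulVecLin)
      ≤ LinearMap.range A.mulVecLin ⊔ LinearMap.range B.mulVecLin := by
    rintro x ⟨y, rfl⟩
    exact Submodule.mem_sup.mpr ⟨A.mulVecLin y, ⟨y, rfl⟩, B.mulVecLin y, ⟨y, rfl⟩, rfl⟩
  exact le_trans (Submodule.finrank_mono hr)
    (Submodule.finrank_add_le_finrank_add_finrank _ _)

lemma matRank_sum_le {ι : Type} [Fintype ι] (f : ι → Matrix (Fin d) (Fin d) ℝ) :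
    (∑ j, f j).rank ≤ ∑ j, (f j).rank := by
  classical
  have h : ∀ s : Finset ι, (∑ j ∈ s, f j).rank ≤ ∑ j ∈ s, (f j).rank := by
    intro s
    induction s using Finset.cons_induction with
    | empty => simp [Matrix.rank_zero]
    | cons a s ha ih =>
        rw [Finset.sum_cons, Finset.sum_cons]
        exact le_trans (matRank_add_le _ _) (by omega)
  exact h Finset.univ

def projm (C : Matrix (Fin d) (Fin d) ℝ) : Matrix (Fin d) (Fin d) ℝ :=
  ∑ j, (if ev C j = 0 then (0:ℝ) else 1) • Matrix.vecMulVec (eb C j) (eb C j)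

lemma projm_transpose (C : Matrix (Fin d) (Fin d) ℝ) : (projm C)ᵀ = projm C := by
  ext i k
  simp only [Matrix.transpose_apply, projm, Matrix.sum_apply, Matrix.smul_apply,
    Matrix.vecMulVec_apply, smul_eq_mul]
  exact Finset.sum_congr rfl fun j _ => by ring

lemma mul_vecMulVec (M : Matrix (Fin d) (Fin d) ℝ) (u v : Fin d → ℝ) :
    M * Matrix.vecMulVec u v = Matrix.vecMulVec (M *ᵥ u) v := by
  ext i k
  simp only [Matrix.mul_apply, Matrix.vecMulVec_apply, Matrix.mulVec, dotProduct,
    Finset.sum_mul]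
  exact Finset.sum_congr rfl fun j _ => by ring

lemma vecMulVec_smul_left (c : ℝ) (u v : Fin d → ℝ) :
    Matrix.vecMulVec (c • u) v = c • Matrix.vecMulVec u v := by
  ext i k
  simp only [Matrix.vecMulVec_apply, Matrix.smul_apply, Pi.smul_apply, smul_eq_mul]
  ring

lemma projm_mulVec_eb (C : Matrix (Fin d) (Fin d) ℝ) (k : Fin d) :
    projm C *ᵥ eb C k = (if ev C k = 0 then (0:ℝ) else 1) • eb C k := by
  rw [projm, _root_.sum_mulVec]
  have h : ∀ j, ((if ev C j = 0 then (0:ℝ) else 1) • Matrix.vecMulVec (eb C j) (eb C j)) *ᵥ eb C k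
      = (if j = k then (if ev C j = 0 then (0:ℝ) else 1) else 0) • eb C j := by
    intro j
    rw [_root_.smul_mulVec, vecMulVec_mulVec, eb_dot, smul_smul]
    by_cases hjk : j = k
    · rw [if_pos hjk, if_pos hjk, mul_one]
    · rw [if_neg hjk, if_neg hjk, mul_zero, zero_smul]
  have h' : ∀ j, ((if ev C j = 0 then (0:ℝ) else 1) • Matrix.vecMulVec (eb C j) (eb C j)) *ᵥ eb C k
      = if j = k then ((if ev C j = 0 then (0:ℝ) else 1) • eb C k) else 0 := by
    intro j
    rw [h j]
    by_cases hjk : j = k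
    · subst hjk; simp
    · simp [hjk]
  rw [Finset.sum_congr rfl fun j (_ : j ∈ Finset.univ) => h' j, Finset.sum_ite_eq']
  simp

lemma projm_idem (C : Matrix (Fin d) (Fin d) ℝ) : projm C * projm C = projm C := by
  nth_rewrite 2 [projm]
  rw [Finset.mul_sum]
  nth_rewrite 2 [projm]
  refine Finset.sum_congr rfl fun j _ => ?_
  rw [Matrix.mul_smul, mul_vecMulVec, projm_mulVec_eb, vecMulVec_smul_left, smul_smul]
  by_cases h : ev C j = 0
  · simp [h]
  · simp [h]

lemma compl_matrix (C : Matrix (Fin d) (Fin d) ℝ) :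
    ∑ j, Matrix.vecMulVec (eb C j) (eb C j) = 1 := by
  ext l k
  simp only [Matrix.sum_apply, Matrix.vecMulVec_apply, Matrix.one_apply]
  exact eb_complete C l k

lemma CtC_eq (C : Matrix (Fin d) (Fin d) ℝ) :
    Cᵀ * C = ∑ j, ev C j • Matrix.vecMulVec (eb C j) (eb C j) := by
  conv_lhs => rw [← mul_one (Cᵀ * C), ← compl_matrix C]
  rw [Finset.mul_sum]
  refine Finset.sum_congr rfl fun j _ => ?_
  rw [mul_vecMulVec, mulVec_eb, vecMulVec_smul_left]

lemma CtC_proj (C : Matrix (Fin d) (Fin d) ℝ) : (Cᵀ * C) * projm C = Cᵀ * C := by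
  rw [projm, Finset.mul_sum]
  nth_rewrite 2 [CtC_eq C]
  refine Finset.sum_congr rfl fun j _ => ?_
  rw [Matrix.mul_smul, mul_vecMulVec, mulVec_eb, vecMulVec_smul_left, smul_smul]
  by_cases h : ev C j = 0
  · simp [h]
  · simp [h]

lemma eq_zero_of_transpose_mul_self (M : Matrix (Fin d) (Fin d) ℝ) (h : Mᵀ * M = 0) :
    M = 0 := by
  ext i k
  have hk := congrFun (congrFun h k) k
  simp only [Matrix.mul_apply, Matrix.transpose_apply, Matrix.zero_apply] at hk
  have hz := (Finset.sum_eq_zero_iff_of_nonneg (fun i _ => mul_self_nonneg (M i k))).mp hk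
  exact mul_self_eq_zero.mp (hz i (Finset.mem_univ i))

lemma projm_absorb (C : Matrix (Fin d) (Fin d) ℝ) : C * projm C = C := by
  have hN : (C * (1 - projm C))ᵀ * (C * (1 - projm C)) = 0 := by
    rw [Matrix.transpose_mul, Matrix.transpose_sub, Matrix.transpose_one, projm_transpose,
      Matrix.mul_assoc, ← Matrix.mul_assoc Cᵀ C (1 - projm C), Matrix.mul_sub, mul_one,
      CtC_proj, sub_self, Matrix.mul_zero]
  have h0 := eq_zero_of_transpose_mul_self _ hN
  rw [Matrix.mul_sub, mul_one] at h0
  exact (sub_eq_zero.mp h0).symm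


lemma matRank_vecMulVec_le (u v : Fin d → ℝ) : (Matrix.vecMulVec u v).rank ≤ 1 := by
  rw [Matrix.vecMulVec_eq (Fin 1)]
  refine le_trans (Matrix.rank_mul_le_left _ _) ?_
  exact le_trans (Matrix.rank_le_card_width (Matrix.replicateCol (Fin 1) u)) (by simp)

lemma rank_projm_le (C : Matrix (Fin d) (Fin d) ℝ) : (projm C).rank ≤ C.rank := by
  classical
  have h1 : (projm C).rank ≤ ∑ j, (if ev C j = 0 then 0 else 1 : ℕ) := by
    refine le_trans (matRank_sum_le _) (Finset.sum_le_sum fun j _ => ?_)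
    by_cases h : ev C j = 0
    · simp [h, Matrix.rank_zero]
    · rw [if_neg h, if_neg h, one_smul]
      exact matRank_vecMulVec_le (eb C j) (eb C j)
  have h3 : ∀ j ∈ Finset.univ, (if ev C j = 0 then 0 else 1 : ℕ)
      = if ev C j ≠ 0 then 1 else 0 := by
    intro j _
    by_cases h : ev C j = 0 <;> simp [h]
  have h2 : ∑ j, (if ev C j = 0 then 0 else 1 : ℕ)
      = Fintype.card {i // ev C i ≠ 0} := by
    rw [Finset.sum_congr rfl h3, Finset.sum_boole, Fintype.card_subtype]
    simp
  rw [rank_eq_card C]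
  omega

lemma sum_ind_sq (A : Matrix (Fin d) (Fin d) ℝ) :
    ∑ j, (if ev A j = 0 then (0:ℝ) else 1) ^ 2 = (A.rank : ℝ) := by
  classical
  have h : ∀ j, (if ev A j = 0 then (0:ℝ) else 1) ^ 2
      = if ev A j ≠ 0 then (1:ℝ) else 0 := by
    intro j
    by_cases hj : ev A j = 0 <;> simp [hj]
  rw [Finset.sum_congr rfl fun j (_ : j ∈ Finset.univ) => h j, Finset.sum_boole,
    rank_eq_card A, Fintype.card_subtype]

lemma nucNorm_le_sqrt_rank (A : Matrix (Fin d) (Fin d) ℝ) {m : ℕ} (hm : A.rank ≤ m) :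
    nucNorm A ≤ Real.sqrt m * frobNorm A := by
  classical
  set ind : Fin d → ℝ := fun j => if ev A j = 0 then 0 else 1 with hind
  set sv : Fin d → ℝ := fun j => Real.sqrt (ev A j) with hsv
  have h1 : nucNorm A = ind ⬝ᵥ sv := by
    rw [nucNorm_eq, dotProduct]
    refine Finset.sum_congr rfl fun j _ => ?_
    by_cases hj : ev A j = 0
    · simp [hind, hsv, hj]
    · simp [hind, hsv, hj]
  have h2 : l2 sv = frobNorm A := by
    rw [l2]
    have : ∑ i, sv i ^ 2 = frobNorm A ^ 2 := by
      rw [← sum_ev A]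
      exact Finset.sum_congr rfl fun j _ => Real.sq_sqrt (ev_nonneg A j)
    rw [this, Real.sqrt_sq (frobNorm_nonneg A)]
  have h3 : l2 ind ≤ Real.sqrt m := by
    rw [l2]
    refine Real.sqrt_le_sqrt ?_
    rw [sum_ind_sq A]
    exact_mod_cast hm
  calc nucNorm A = ind ⬝ᵥ sv := h1
    _ ≤ l2 ind * l2 sv := dot_le_l2 _ _
    _ ≤ Real.sqrt m * frobNorm A := by
        rw [h2]
        exact mul_le_mul_of_nonneg_right h3 (frobNorm_nonneg A)


lemma minner_comm (A B : Matrix (Fin d) (Fin d) ℝ) : minner A B = minner B A := by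
  unfold minner
  exact Finset.sum_congr rfl fun i _ => Finset.sum_congr rfl fun j _ => mul_comm _ _

lemma minner_dualW_orth {A B : Matrix (Fin d) (Fin d) ℝ} (hAB : Aᵀ * B = 0) :
    minner (dualW A) B = 0 := by
  rw [dualW, minner_sum_left]
  refine Finset.sum_eq_zero fun j _ => ?_
  rw [minner_smul_left, minner_vecMulVec_left, dot_zero_of_orth hAB, mul_zero]

lemma decomp (Θs Δ : Matrix (Fin d) (Fin d) ℝ) {r : ℕ} (hrank : Θs.rank ≤ r) :
    ∃ D1 D2 : Matrix (Fin d) (Fin d) ℝ,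
      Δ = D1 + D2 ∧ D1.rank ≤ 2 * r ∧ minner D1 D2 = 0 ∧
      Θsᵀ * D2 = 0 ∧ Θs * D2ᵀ = 0 := by
  set P := projm Θsᵀ with hP
  set Q := projm Θs with hQ
  have hPt : Pᵀ = P := projm_transpose _
  have hQt : Qᵀ = Q := projm_transpose _
  have hPP : P * P = P := projm_idem _
  have hQQ : Q * Q = Q := projm_idem _
  have hΘP : Θsᵀ * P = Θsᵀ := projm_absorb Θsᵀ
  have hΘQ : Θs * Q = Θs := projm_absorb Θs
  have hΘIP : Θsᵀ * (1 - P) = 0 := by rw [Matrix.mul_sub, Matrix.mul_one, hΘP, sub_self]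
  have hΘIQ : Θs * (1 - Q) = 0 := by rw [Matrix.mul_sub, Matrix.mul_one, hΘQ, sub_self]
  have hP0 : P * (1 - P) = 0 := by rw [Matrix.mul_sub, Matrix.mul_one, hPP, sub_self]
  have hQ0 : (1 - Q) * Q = 0 := by rw [Matrix.sub_mul, Matrix.one_mul, hQQ, sub_self]
  have hIP : ((1 : Matrix (Fin d) (Fin d) ℝ) - P) * (1 - P) = 1 - P := by
    have h : ((1 : Matrix (Fin d) (Fin d) ℝ) - P) * (1 - P) = 1 - P - P + P * P := by
      noncomm_ring
    rw [h, hPP]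
    abel
  refine ⟨P * Δ + (1 - P) * Δ * Q, (1 - P) * Δ * (1 - Q), by noncomm_ring, ?_, ?_, ?_, ?_⟩
  · refine le_trans (matRank_add_le _ _) ?_
    have h1 : (P * Δ).rank ≤ r := by
      refine le_trans (Matrix.rank_mul_le_left _ _) (le_trans (rank_projm_le _) ?_)
      rw [Matrix.rank_transpose]
      exact hrank
    have h2 : ((1 - P) * Δ * Q).rank ≤ r :=
      le_trans (Matrix.rank_mul_le_right _ _) (le_trans (rank_projm_le _) hrank)
    omega
  · rw [minner_add_left]
    have hz1 : (P * Δ)ᵀ * ((1 - P) * Δ * (1 - Q)) = 0 := by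
      have h : (P * Δ)ᵀ * ((1 - P) * Δ * (1 - Q))
          = Δᵀ * ((P * (1 - P)) * (Δ * (1 - Q))) := by
        rw [Matrix.transpose_mul, hPt]
        noncomm_ring
      rw [h, hP0, Matrix.zero_mul, Matrix.mul_zero]
    have hz2 : minner ((1 - P) * Δ * Q) ((1 - P) * Δ * (1 - Q)) = 0 := by
      rw [minner_eq_trace]
      have h : ((1 - P) * Δ * Q)ᵀ * ((1 - P) * Δ * (1 - Q))
          = Q * ((Δᵀ * ((1 - P) * Δ)) * (1 - Q)) := by
        rw [Matrix.transpose_mul, Matrix.transpose_mul, hQt, Matrix.transpose_sub,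
          Matrix.transpose_one, hPt]
        calc Q * (Δᵀ * (1 - P)) * ((1 - P) * Δ * (1 - Q))
            = Q * ((Δᵀ * (((1 - P) * (1 - P)) * Δ)) * (1 - Q)) := by noncomm_ring
          _ = Q * ((Δᵀ * ((1 - P) * Δ)) * (1 - Q)) := by rw [hIP]
      rw [h, Matrix.trace_mul_comm]
      have h2 : (Δᵀ * ((1 - P) * Δ)) * (1 - Q) * Q
          = (Δᵀ * ((1 - P) * Δ)) * ((1 - Q) * Q) := by noncomm_ring
      rw [h2, hQ0, Matrix.mul_zero, Matrix.trace_zero]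
    rw [minner_eq_trace, hz1, Matrix.trace_zero, hz2, add_zero]
  · have h : Θsᵀ * ((1 - P) * Δ * (1 - Q)) = (Θsᵀ * (1 - P)) * (Δ * (1 - Q)) := by
      noncomm_ring
    rw [h, hΘIP, Matrix.zero_mul]
  · have ht : ((1 - P) * Δ * (1 - Q))ᵀ = (1 - Q) * (Δᵀ * (1 - P)) := by
      simp only [Matrix.transpose_mul, Matrix.transpose_sub, Matrix.transpose_one, hPt, hQt]
    rw [ht]
    have h : Θs * ((1 - Q) * (Δᵀ * (1 - P))) = (Θs * (1 - Q)) * (Δᵀ * (1 - P)) := by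
      noncomm_ring
    rw [h, hΘIQ, Matrix.zero_mul]

end Aux

set_option maxHeartbeats 2000000 in
/-- deterministic framework for the quantized matrix completion estimator.
Let `rank(Θ*) ≤ r`, `‖Θ*‖_∞ ≤ α`, and let `Θ̂` minimize
`(1/2n)Σ(ẏ_k − ⟨X_k, Θ⟩)² + λ‖Θ‖_nu` over `{‖Θ‖_∞ ≤ α}`. If
`λ ≥ 2‖(1/n)Σ(⟨X_k, Θ*⟩ − ẏ_k)X_k‖_op`, then `‖Δ̂‖_nu ≤ 10√r‖Δ̂‖_F`; if moreover
`(1/n)Σ⟨X_k, Δ̂⟩² ≥ κ‖Δ̂‖_F²`, then `‖Δ̂‖_F ≤ 30√r(λ/κ)` and `‖Δ̂‖_nu ≤ 300r(λ/κ)`. -/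
theorem matrix_completion_framework
    {d n : ℕ} (X : Fin n → Matrix (Fin d) (Fin d) ℝ)
    (Θs : Matrix (Fin d) (Fin d) ℝ) (r : ℕ) (hrank : Θs.rank ≤ r)
    (α : ℝ) (hΘs : matSup Θs ≤ α)
    (qy : Fin n → ℝ) (lam : ℝ) (hlam : 0 < lam)
    (Θh : Matrix (Fin d) (Fin d) ℝ) (hΘh : matSup Θh ≤ α)
    (hmin : ∀ Θ : Matrix (Fin d) (Fin d) ℝ, matSup Θ ≤ α →
      (∑ k, (qy k - minner (X k) Θh) ^ 2) / (2 * n) + lam * nucNorm Θh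
        ≤ (∑ k, (qy k - minner (X k) Θ) ^ 2) / (2 * n) + lam * nucNorm Θ)
    (hlam2 : 2 * opNorm ((n : ℝ)⁻¹ • ∑ k, (minner (X k) Θs - qy k) • X k) ≤ lam) :
    nucNorm (Θh - Θs) ≤ 10 * Real.sqrt r * frobNorm (Θh - Θs) ∧
    (∀ κ : ℝ, 0 < κ → κ * (frobNorm (Θh - Θs)) ^ 2 ≤ (∑ k, (minner (X k) (Θh - Θs)) ^ 2) / n →
      frobNorm (Θh - Θs) ≤ 30 * Real.sqrt r * (lam / κ) ∧
      nucNorm (Θh - Θs) ≤ 300 * r * (lam / κ)) := by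
  classical
  set Δ : Matrix (Fin d) (Fin d) ℝ := Θh - Θs with hΔdef
  set M : Matrix (Fin d) (Fin d) ℝ := (n : ℝ)⁻¹ • ∑ k, (minner (X k) Θs - qy k) • X k
    with hMdef
  set S : ℝ := ∑ k, (minner (X k) Δ) ^ 2 with hSdef
  set T : ℝ := ∑ k, (qy k - minner (X k) Θs) * minner (X k) Δ with hTdef
  have h0 := hmin Θs hΘs
  have hsumid : ∑ k, (qy k - minner (X k) Θh) ^ 2
      = (∑ k, (qy k - minner (X k) Θs) ^ 2) - 2 * T + S := by
    rw [hTdef, hSdef, Finset.mul_sum, ← Finset.sum_sub_distrib, ← Finset.sum_add_distrib]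
    refine Finset.sum_congr rfl fun k _ => ?_
    have hδ : minner (X k) Δ = minner (X k) Θh - minner (X k) Θs := by
      rw [hΔdef, minner_sub_right]
    rw [hδ]; ring
  have hMT : minner M Δ = -(T / (n : ℝ)) := by
    rw [hMdef, minner_smul_left, minner_sum_left]
    have h1 : ∑ k, minner ((minner (X k) Θs - qy k) • X k) Δ = -T := by
      rw [hTdef, ← Finset.sum_neg_distrib]
      refine Finset.sum_congr rfl fun k _ => ?_
      rw [minner_smul_left]; ring
    rw [h1, div_eq_inv_mul]; ring
  have hbasic : S / (2 * (n : ℝ)) ≤ -(minner M Δ) + lam * (nucNorm Θs - nucNorm Θh) := by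
    have h2T : (2 * T) / (2 * (n : ℝ)) = T / (n : ℝ) := by
      rcases eq_or_ne (n : ℝ) 0 with hn | hn
      · rw [hn]; simp
      · field_simp
    have hsplit : ((∑ k, (qy k - minner (X k) Θs) ^ 2) - 2 * T + S) / (2 * (n : ℝ))
        = (∑ k, (qy k - minner (X k) Θs) ^ 2) / (2 * (n : ℝ))
          - (2 * T) / (2 * (n : ℝ)) + S / (2 * (n : ℝ)) := by
      rw [add_div, sub_div]
    rw [hsumid, hsplit, h2T] at h0
    rw [hMT]
    linarith
  obtain ⟨D1, D2, hsum, hrank2, horth, hc1, hc2⟩ := decomp Θs Δ hrank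
  have hN1 := nucNorm_nonneg D1
  have hN2 := nucNorm_nonneg D2
  have hopM : opNorm M ≤ lam / 2 := by linarith
  have hminM : -(minner M Δ) ≤ lam / 2 * nucNorm Δ := by
    have h1 : minner (-M) Δ ≤ opNorm (-M) * nucNorm Δ := minner_le_op_nuc _ _
    rw [minner_neg_left, opNorm_neg] at h1
    have h2 : opNorm M * nucNorm Δ ≤ lam / 2 * nucNorm Δ :=
      mul_le_mul_of_nonneg_right hopM (nucNorm_nonneg Δ)
    linarith
  have htri : nucNorm Δ ≤ nucNorm D1 + nucNorm D2 := by
    rw [hsum]; exact nucNorm_triangle _ _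
  have hc1t : D2ᵀ * Θs = 0 := by
    have h := congrArg Matrix.transpose hc1
    rwa [Matrix.transpose_mul, Matrix.transpose_transpose, Matrix.transpose_zero] at h
  have hWop : opNorm (dualW Θs + dualW D2) ≤ 1 := opNorm_dualW_add hc1 hc2
  have hΘh_decomp : Θh = Θs + (D1 + D2) := by
    rw [← hsum, hΔdef]; abel
  have hlowΘh : nucNorm Θs + nucNorm D2 - nucNorm D1 ≤ nucNorm Θh := by
    have hle : minner (dualW Θs + dualW D2) Θh ≤ nucNorm Θh := minner_le_nuc hWop Θh
    have hexp : minner (dualW Θs + dualW D2) Θh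
        = nucNorm Θs + nucNorm D2 + (minner (dualW Θs) D1 + minner (dualW D2) D1) := by
      rw [hΘh_decomp]
      simp only [minner_add_right, minner_add_left, minner_dualW, minner_dualW_orth hc1,
        minner_dualW_orth hc1t]
      ring
    have hD1 : -(nucNorm D1) ≤ minner (dualW Θs) D1 + minner (dualW D2) D1 := by
      have h1 : minner (-(dualW Θs + dualW D2)) D1
          ≤ opNorm (-(dualW Θs + dualW D2)) * nucNorm D1 := minner_le_op_nuc _ _
      rw [minner_neg_left, opNorm_neg, minner_add_left] at h1
      have h2 : opNorm (dualW Θs + dualW D2) * nucNorm D1 ≤ 1 * nucNorm D1 :=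
        mul_le_mul_of_nonneg_right hWop hN1
      linarith
    rw [hexp] at hle
    linarith
  have hS0 : 0 ≤ S / (2 * (n : ℝ)) := by
    refine div_nonneg ?_ (by positivity)
    rw [hSdef]
    exact Finset.sum_nonneg fun k _ => sq_nonneg _
  have hchain : S / (2 * (n : ℝ))
      ≤ lam / 2 * (nucNorm D1 + nucNorm D2) + lam * (nucNorm D1 - nucNorm D2) := by
    have h1 : lam * (nucNorm Θs - nucNorm Θh) ≤ lam * (nucNorm D1 - nucNorm D2) :=
      mul_le_mul_of_nonneg_left (by linarith) hlam.le
    have h2 : lam / 2 * nucNorm Δ ≤ lam / 2 * (nucNorm D1 + nucNorm D2) :=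
      mul_le_mul_of_nonneg_left htri (by linarith)
    linarith
  have h31 : nucNorm D2 ≤ 3 * nucNorm D1 := by
    have h1 : 0 ≤ lam * (3 / 2 * nucNorm D1 - 1 / 2 * nucNorm D2) := by nlinarith
    nlinarith
  have hfrob1 : frobNorm D1 ≤ frobNorm Δ := by
    have hpy : frobNorm Δ ^ 2 = frobNorm D1 ^ 2 + frobNorm D2 ^ 2 := by
      rw [← minner_self, ← minner_self, ← minner_self, hsum, minner_add_left,
        minner_add_right, minner_add_right, horth, minner_comm D2 D1, horth]
      ring
    nlinarith [frobNorm_nonneg D1, frobNorm_nonneg Δ, sq_nonneg (frobNorm D2)]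
  have hN1b : nucNorm D1 ≤ Real.sqrt (2 * (r : ℝ)) * frobNorm Δ := by
    have h := nucNorm_le_sqrt_rank D1 hrank2
    have hcast : ((2 * r : ℕ) : ℝ) = 2 * (r : ℝ) := by push_cast; ring
    rw [hcast] at h
    calc nucNorm D1 ≤ Real.sqrt (2 * (r : ℝ)) * frobNorm D1 := h
      _ ≤ Real.sqrt (2 * (r : ℝ)) * frobNorm Δ :=
          mul_le_mul_of_nonneg_left hfrob1 (Real.sqrt_nonneg _)
  have hsqrt2 : Real.sqrt (2 * (r : ℝ)) ≤ 3 / 2 * Real.sqrt r := by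
    rw [Real.sqrt_mul (by norm_num : (0:ℝ) ≤ 2)]
    have h2 : Real.sqrt 2 ≤ 3 / 2 := by
      nlinarith [Real.sq_sqrt (by norm_num : (0:ℝ) ≤ 2), Real.sqrt_nonneg 2]
    exact mul_le_mul_of_nonneg_right h2 (Real.sqrt_nonneg _)
  have hrt0 : 0 ≤ Real.sqrt (r : ℝ) := Real.sqrt_nonneg _
  have hφ0 := frobNorm_nonneg Δ
  have hN1c : nucNorm D1 ≤ 3 / 2 * Real.sqrt r * frobNorm Δ := by
    have h := mul_le_mul_of_nonneg_right hsqrt2 hφ0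
    linarith
  have hpart1 : nucNorm Δ ≤ 10 * Real.sqrt r * frobNorm Δ := by
    have hchain2 : nucNorm Δ ≤ 4 * nucNorm D1 := by linarith
    nlinarith [mul_nonneg hrt0 hφ0]
  refine ⟨hpart1, ?_⟩
  intro κ hκ hκ2
  have hdiv : S / (2 * (n : ℝ)) = (S / (n : ℝ)) / 2 := by
    rw [div_div]; ring_nf
  have hkey : κ * frobNorm Δ ^ 2 ≤ 9 / 2 * (lam * (Real.sqrt r * frobNorm Δ)) := by
    have h1 : κ * frobNorm Δ ^ 2 / 2 ≤ S / (2 * (n : ℝ)) := by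
      rw [hdiv]; linarith
    have h2 : S / (2 * (n : ℝ)) ≤ 3 / 2 * (lam * nucNorm D1) := by nlinarith
    have h3 : lam * nucNorm D1 ≤ lam * (3 / 2 * Real.sqrt r * frobNorm Δ) :=
      mul_le_mul_of_nonneg_left hN1c hlam.le
    nlinarith
  have hgoal1 : frobNorm Δ ≤ 30 * Real.sqrt r * (lam / κ) := by
    rcases eq_or_lt_of_le hφ0 with h0 | h0
    · rw [← h0]; positivity
    · have h1 : κ * frobNorm Δ ≤ 9 / 2 * (lam * Real.sqrt r) := by nlinarith
      have h2 : 30 * Real.sqrt r * (lam / κ) = (30 * Real.sqrt r * lam) / κ := by ring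
      rw [h2, le_div_iff₀ hκ]
      nlinarith [mul_nonneg hlam.le hrt0]
  refine ⟨hgoal1, ?_⟩
  have h1 : 10 * Real.sqrt r * frobNorm Δ
      ≤ 10 * Real.sqrt r * (30 * Real.sqrt r * (lam / κ)) :=
    mul_le_mul_of_nonneg_left hgoal1 (by positivity)
  have h3 : 10 * Real.sqrt r * (30 * Real.sqrt r * (lam / κ))
      = 300 * (Real.sqrt r * Real.sqrt r) * (lam / κ) := by ring
  rw [Real.mul_self_sqrt (Nat.cast_nonneg r)] at h3
  linarith
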